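/- For every sufficiently small ε > 0 and every sufficiently large constant K, for all sufficiently large n the following holds: the number of maximal sum-free subsets M of [n] satisfying (α) min(M) ∈ [(1/4 − 175ε)n, (1/4 + 175ε)n], (β) either |M| = 1 or min₂(M) ≥ (1/2 − 350ε)n, and additionally |min(M) − n/4| ≥ 50K and (|M| = 1 or min₂(M) ≥ n/2 − K), is at most ε·2^{n/4}. -/

import Mathlib

/-- A set of naturals is sum-free if it contains no Schur triple `x + y = z`. -/
def SumFree (S : Finset ℕ) : Prop := ∀ x ∈ S, ∀ y ∈ S, x + y ∉ S

/-- `M` is a maximal sum-free subset of `[n] = {1, …, n}`. -/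
def MaxSF (n : ℕ) (M : Finset ℕ) : Prop :=
  M ⊆ Finset.Icc 1 n ∧ SumFree M ∧
    ∀ M' : Finset ℕ, M' ⊆ Finset.Icc 1 n → SumFree M' → M ⊆ M' → M = M'

namespace FewAux

def Dom (c n a : ℕ) (W B : Finset ℕ) : Prop :=
  B ⊆ Finset.Icc c n ∧ (∀ x ∈ B, x + a ∉ B) ∧
    ∀ t ∈ Finset.Icc c n, t ∉ W → t ∉ B → (t - a ∈ B ∨ t + a ∈ B)

def Sig (c n a : ℕ) (W : Finset ℕ) : Finset ℕ :=
  ((Finset.Icc c n).filter fun x => x ∈ W ∨ x - a ∈ W) ∪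
    ((Finset.Icc c n).filter fun x => x < c + a ∧ x + a ≤ n)

lemma reconstruct {c n a : ℕ} {W B₁ B₂ : Finset ℕ}
    (ha : 0 < a) (hac : a < c) (hrun : n < c + 3 * a)
    (h₁ : Dom c n a W B₁) (h₂ : Dom c n a W B₂)
    (hS : B₁ ∩ Sig c n a W = B₂ ∩ Sig c n a W) : B₁ = B₂ := by
  obtain ⟨hB₁, hI₁, hD₁⟩ := h₁
  obtain ⟨hB₂, hI₂, hD₂⟩ := h₂
  ext x
  induction x using Nat.strong_induction_on with
  | _ x ih =>
  by_cases hx : x ∈ Finset.Icc c n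
  · by_cases hxS : x ∈ Sig c n a W
    · constructor
      · intro h
        have h' : x ∈ B₁ ∩ Sig c n a W := Finset.mem_inter.mpr ⟨h, hxS⟩
        rw [hS] at h'; exact (Finset.mem_inter.mp h').1
      · intro h
        have h' : x ∈ B₂ ∩ Sig c n a W := Finset.mem_inter.mpr ⟨h, hxS⟩
        rw [← hS] at h'; exact (Finset.mem_inter.mp h').1
    · have hcx : c ≤ x := (Finset.mem_Icc.mp hx).1
      have hxn : x ≤ n := (Finset.mem_Icc.mp hx).2
      have hW : x ∉ W := by
        intro h; exact hxS (Finset.mem_union_left _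
          (Finset.mem_filter.mpr ⟨hx, Or.inl h⟩))
      have hWa : x - a ∉ W := by
        intro h; exact hxS (Finset.mem_union_left _
          (Finset.mem_filter.mpr ⟨hx, Or.inr h⟩))
      have hmins : ¬(x < c + a ∧ x + a ≤ n) := by
        intro h; exact hxS (Finset.mem_union_right _ (Finset.mem_filter.mpr ⟨hx, h⟩))
      by_cases hlt : x < c + a
      · -- x is an isolated vertex: forced into both sets
        have hxa : n < x + a := by
          by_contra h; exact hmins ⟨hlt, by omega⟩
        have force : ∀ B : Finset ℕ, B ⊆ Finset.Icc c n →
            (∀ t ∈ Finset.Icc c n, t ∉ W → t ∉ B → (t - a ∈ B ∨ t + a ∈ B)) →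
            x ∈ B := by
          intro B hB hD
          by_contra hxB
          rcases hD x hx hW hxB with h | h
          · have := Finset.mem_Icc.mp (hB h); omega
          · have := Finset.mem_Icc.mp (hB h); omega
        simp [force B₁ hB₁ hD₁, force B₂ hB₂ hD₂]
      · -- x ≥ c + a
        have hge : c + a ≤ x := by omega
        have hxa_mem : x - a ∈ Finset.Icc c n := Finset.mem_Icc.mpr ⟨by omega, by omega⟩
        have hprev : (x - a ∈ B₁) ↔ (x - a ∈ B₂) := ih (x - a) (by omega)
        by_cases hp : x - a ∈ B₁
        · have hp₂ : x - a ∈ B₂ := hprev.mp hp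
          have h1 : x ∉ B₁ := by
            have := hI₁ _ hp; rwa [Nat.sub_add_cancel (by omega)] at this
          have h2 : x ∉ B₂ := by
            have := hI₂ _ hp₂; rwa [Nat.sub_add_cancel (by omega)] at this
          simp [h1, h2]
        · have hp₂ : x - a ∉ B₂ := fun h => hp (hprev.mpr h)
          have force : ∀ B : Finset ℕ, B ⊆ Finset.Icc c n →
              (∀ t ∈ Finset.Icc c n, t ∉ W → t ∉ B → (t - a ∈ B ∨ t + a ∈ B)) →
              x - a ∉ B → x ∈ B := by
            intro B hB hD hpB
            by_cases hxn' : x + a ≤ n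
            · rcases hD (x - a) hxa_mem hWa hpB with h | h
              · exfalso; have := Finset.mem_Icc.mp (hB h); omega
              · rwa [Nat.sub_add_cancel (by omega)] at h
            · by_contra hxB
              rcases hD x hx hW hxB with h | h
              · exact hpB h
              · have := Finset.mem_Icc.mp (hB h); omega
          simp [force B₁ hB₁ hD₁ hp, force B₂ hB₂ hD₂ hp₂]
  · constructor
    · intro h; exact absurd (hB₁ h) hx
    · intro h; exact absurd (hB₂ h) hx

lemma sig_card {c n a : ℕ} (hac : a < c) (W : Finset ℕ) :
    (Sig c n a W).card ≤ 2 * W.card +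
      ((Finset.Icc c n).filter fun x => x < c + a ∧ x + a ≤ n).card := by
  refine le_trans (Finset.card_union_le _ _) ?_
  have hsub : ((Finset.Icc c n).filter fun x => x ∈ W ∨ x - a ∈ W) ⊆
      W ∪ W.image (· + a) := by
    intro x hx
    obtain ⟨hxI, h⟩ := Finset.mem_filter.mp hx
    rcases h with h | h
    · exact Finset.mem_union_left _ h
    · refine Finset.mem_union_right _ (Finset.mem_image.mpr ⟨x - a, h, ?_⟩)
      have := (Finset.mem_Icc.mp hxI).1
      omega
  have h1 : ((Finset.Icc c n).filter fun x => x ∈ W ∨ x - a ∈ W).card ≤ 2 * W.card := by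
    calc _ ≤ (W ∪ W.image (· + a)).card := Finset.card_le_card hsub
    _ ≤ W.card + (W.image (· + a)).card := Finset.card_union_le _ _
    _ ≤ W.card + W.card := Nat.add_le_add_left Finset.card_image_le _
    _ = 2 * W.card := by ring
  omega


lemma sum_inv_pow_Icc (L N : ℕ) :
    ∑ a ∈ Finset.Icc L N, ((2:ℝ)⁻¹) ^ a ≤ 2 * ((2:ℝ)⁻¹) ^ L := by
  have hsub : Finset.Icc L N ⊆ (Finset.range (N+1-L)).image (· + L) := by
    intro a ha
    rw [Finset.mem_Icc] at ha
    exact Finset.mem_image.mpr ⟨a - L, Finset.mem_range.mpr (by omega), by omega⟩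
  have hgeom : ∀ m : ℕ, ∑ i ∈ Finset.range m, ((2:ℝ)⁻¹) ^ i ≤ 2 := by
    intro m
    rw [geom_sum_eq (by norm_num : ((2:ℝ)⁻¹) ≠ 1) m]
    have h1 : (0:ℝ) ≤ ((2:ℝ)⁻¹) ^ m := by positivity
    have h2 : ((2:ℝ)⁻¹) - 1 = -(1/2) := by norm_num
    rw [h2]
    rw [div_le_iff_of_neg (by norm_num : (-(1/2):ℝ) < 0)]
    linarith
  calc ∑ a ∈ Finset.Icc L N, ((2:ℝ)⁻¹) ^ a
      ≤ ∑ a ∈ (Finset.range (N+1-L)).image (· + L), ((2:ℝ)⁻¹) ^ a :=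
        Finset.sum_le_sum_of_subset_of_nonneg hsub (by intros; positivity)
    _ = ∑ i ∈ Finset.range (N+1-L), ((2:ℝ)⁻¹) ^ (i + L) :=
        Finset.sum_image (by intro x _ y _ h; simp only at h; omega)
    _ = (∑ i ∈ Finset.range (N+1-L), ((2:ℝ)⁻¹) ^ i) * ((2:ℝ)⁻¹) ^ L := by
        rw [Finset.sum_mul]
        exact Finset.sum_congr rfl (fun i _ => pow_add _ i L)
    _ ≤ 2 * ((2:ℝ)⁻¹) ^ L := by
        apply mul_le_mul_of_nonneg_right (hgeom _) (by positivity)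

lemma quad_le_rpow (x : ℝ) (hx : 0 ≤ x) : x ^ 2 / 9 ≤ (2:ℝ) ^ x := by
  have hlog : (2:ℝ)/3 ≤ Real.log 2 := by
    have := Real.log_two_gt_d9; linarith
  rw [Real.rpow_def_of_pos (by norm_num) x]
  set y := Real.log 2 * x with hy
  have hy0 : 0 ≤ y := mul_nonneg (by linarith) hx
  have h1 : y/2 + 1 ≤ Real.exp (y/2) := by linarith [Real.add_one_le_exp (y/2)]
  have h2 : Real.exp y = Real.exp (y/2) * Real.exp (y/2) := by
    rw [← Real.exp_add]; ring_nf
  have h3 : (y/2+1)*(y/2+1) ≤ Real.exp (y/2) * Real.exp (y/2) :=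
    mul_le_mul h1 h1 (by linarith) (le_trans (by linarith) h1)
  have h5 : (2:ℝ)/3 * x ≤ y := mul_le_mul_of_nonneg_right hlog hx
  nlinarith [sq_nonneg (y/2 - x/3), sq_nonneg (y - (2:ℝ)/3*x)]

end FewAux

open FewAux

set_option maxHeartbeats 2000000

/-- For sufficiently small `ε > 0` and sufficiently large `K`, for all large `n`:
the number of maximal sum-free subsets `M` of `[n]` with
`min(M) ∈ [(1/4 − 175ε)n, (1/4 + 175ε)n]`, `|min(M) − n/4| ≥ 50K`, and
(`|M| = 1` or the second smallest element lying in `[n/2 − K, n]` and being at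
least `(1/2 − 350ε)n`), is at most `ε 2^{n/4}`. -/
theorem few_with_min_away :
    ∃ ε₀ : ℝ, 0 < ε₀ ∧ ∀ ε : ℝ, 0 < ε → ε ≤ ε₀ →
      ∃ K₀ : ℝ, ∀ K : ℝ, K₀ ≤ K → ∃ n₀ : ℕ, ∀ n : ℕ, n₀ ≤ n →
        (Set.ncard {M : Finset ℕ | MaxSF n M ∧
            (∃ a ∈ M, (∀ x ∈ M, a ≤ x) ∧
              ((1 / 4 : ℝ) - 175 * ε) * n ≤ (a : ℝ) ∧
              (a : ℝ) ≤ ((1 / 4 : ℝ) + 175 * ε) * n ∧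
              50 * K ≤ |(a : ℝ) - (n : ℝ) / 4|) ∧
            (M.card = 1 ∨
              ∃ a ∈ M, ∃ b ∈ M, a < b ∧ (∀ x ∈ M, x ≠ a → b ≤ x) ∧
                ((1 / 2 : ℝ) - 350 * ε) * n ≤ (b : ℝ) ∧
                (n : ℝ) / 2 - K ≤ (b : ℝ))} : ℝ)
          ≤ ε * (2 : ℝ) ^ ((n : ℝ) / 4) := by
  classical
  refine ⟨1/4200, by norm_num, fun ε hε hεle => ?_⟩
  have hε1 : ε ≤ 1 := le_trans hεle (by norm_num)
  have hlogb : 0 ≤ Real.logb 2 (1/ε) := by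
    apply Real.logb_nonneg (by norm_num)
    rw [le_div_iff₀ hε]; linarith
  refine ⟨25 + Real.logb 2 (1/ε), fun K hK => ?_⟩
  have hK25 : (25:ℝ) ≤ K := by linarith
  set κ : ℕ := ⌈K⌉₊ with hκdef
  have hKκ : K ≤ (κ:ℝ) := Nat.le_ceil K
  have hκK : (κ:ℝ) ≤ K + 1 := le_of_lt (Nat.ceil_lt_add_one (by linarith))
  set C : ℝ := (2:ℝ) ^ (8*κ+10 : ℕ) with hCdef
  have hC1 : (1:ℝ) ≤ C := one_le_pow₀ (by norm_num : (1:ℝ) ≤ 2)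
  refine ⟨1024 * (⌈C * (1/ε)⌉₊ + 1) + 200 * (κ + 2), fun n hn => ?_⟩
  -- basic numeric facts about n
  have hn200 : 200 * (κ + 2) ≤ n := le_trans (Nat.le_add_left _ _) hn
  have hκn : κ + 1 ≤ n / 2 := by omega
  have hnC : 1024 * (C * (1/ε)) ≤ (n:ℝ) := by
    have h1 : C * (1/ε) ≤ (⌈C * (1/ε)⌉₊ : ℝ) := Nat.le_ceil _
    have h2 : (1024 * (⌈C * (1/ε)⌉₊ + 1) + 200 * (κ + 2) : ℕ) ≤ n := hn
    have h3 : ((1024 * (⌈C * (1/ε)⌉₊ + 1) + 200 * (κ + 2) : ℕ) : ℝ) ≤ (n:ℝ) :=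
      Nat.cast_le.mpr h2
    push_cast at h3
    nlinarith
  have hn1 : (1:ℕ) ≤ n := by omega
  set c : ℕ := n / 2 - κ with hcdef
  have hc1 : 1 ≤ c := by omega
  have hcR1 : (c:ℝ) ≤ (n:ℝ)/2 - K := by
    have h1 : (c:ℝ) = ((n/2 : ℕ) : ℝ) - (κ:ℝ) := by
      rw [hcdef]; push_cast [Nat.cast_sub (by omega : κ ≤ n/2)]; ring
    have h2 : ((n/2 : ℕ) : ℝ) ≤ (n:ℝ)/2 := Nat.cast_div_le
    linarith
  have hcR2 : (n:ℝ)/2 - (κ:ℝ) - 1 ≤ (c:ℝ) := by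
    have h1 : n ≤ 2 * (n/2) + 1 := by omega
    have h2 : ((n:ℝ)) ≤ 2 * ((n/2 : ℕ):ℝ) + 1 := by exact_mod_cast h1
    have h3 : (c:ℝ) = ((n/2 : ℕ) : ℝ) - (κ:ℝ) := by
      rw [hcdef]; push_cast [Nat.cast_sub (by omega : κ ≤ n/2)]; ring
    linarith
  set Wf : ℕ → Finset ℕ := fun a =>
    (Finset.Icc c (n/2 + κ + 1) ∪ Finset.Icc (n - (2*κ+1)) n) ∪ {2*a} with hWfdef
  set mins : ℕ → Finset ℕ :=
    fun a => (Finset.Icc c n).filter fun x => x < c + a ∧ x + a ≤ n with hminsdef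
  set Sg : ℕ → Finset ℕ := fun a => FewAux.Sig c n a (Wf a) with hSgdef
  set A : Finset ℕ := (Finset.Icc 1 n).filter (fun a =>
    ((1/4 : ℝ) - 175*ε) * n ≤ (a:ℝ) ∧ (a:ℝ) ≤ ((1/4:ℝ)+175*ε)*n ∧
      50*K ≤ |(a:ℝ) - (n:ℝ)/4|) with hAdef
  set Φ : Finset ℕ → ℕ × Finset ℕ := fun M =>
    if h : M.Nonempty then (M.min' h, (M.erase (M.min' h)) ∩ Sg (M.min' h))
    else (0, ∅) with hΦdef
  set T : Finset (ℕ × Finset ℕ) :=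
    A.biUnion (fun a => (Sg a).powerset.image fun s => (a, s)) with hTdef
  -- facts about elements of A
  have hεn : (0:ℝ) ≤ (n:ℝ) := Nat.cast_nonneg n
  have haA : ∀ a ∈ A, (1 ≤ a ∧ a ≤ n) ∧ (5:ℝ)/24 * n ≤ (a:ℝ) ∧ (a:ℝ) ≤ 7/24 * n ∧
      50*K ≤ |(a:ℝ) - (n:ℝ)/4| := by
    intro a ha
    rw [hAdef, Finset.mem_filter, Finset.mem_Icc] at ha
    obtain ⟨⟨h1, h2⟩, h3, h4, h5⟩ := ha
    refine ⟨⟨h1, h2⟩, ?_, ?_, h5⟩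
    · have h6 : (5/24:ℝ) * n ≤ ((1/4:ℝ) - 175*ε) * n :=
        mul_le_mul_of_nonneg_right (by linarith) hεn
      linarith
    · have h6 : ((1/4:ℝ) + 175*ε) * n ≤ (7/24:ℝ) * n :=
        mul_le_mul_of_nonneg_right (by linarith) hεn
      linarith
  have haA' : ∀ a ∈ A, 0 < a ∧ a < c ∧ n < c + 3*a := by
    intro a ha
    obtain ⟨⟨h1, h2⟩, h3, h4, h5⟩ := haA a ha
    have hκn' : (κ:ℝ) + 1 ≤ (n:ℝ)/200 := by
      have : ((200 * (κ+2) : ℕ):ℝ) ≤ (n:ℝ) := Nat.cast_le.mpr hn200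
      push_cast at this; linarith
    have hK0 : (0:ℝ) ≤ K := by linarith
    refine ⟨h1, ?_, ?_⟩
    · have : (a:ℝ) < (c:ℝ) := by linarith
      exact_mod_cast this
    · have : (n:ℝ) < (c:ℝ) + 3*(a:ℝ) := by linarith
      exact_mod_cast this
  -- the structural fact
  have key : ∀ M : Finset ℕ, MaxSF n M →
      (∃ a ∈ M, (∀ x ∈ M, a ≤ x) ∧
        ((1 / 4 : ℝ) - 175 * ε) * n ≤ (a : ℝ) ∧
        (a : ℝ) ≤ ((1 / 4 : ℝ) + 175 * ε) * n ∧
        50 * K ≤ |(a : ℝ) - (n : ℝ) / 4|) →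
      (M.card = 1 ∨
        ∃ a ∈ M, ∃ b ∈ M, a < b ∧ (∀ x ∈ M, x ≠ a → b ≤ x) ∧
          ((1 / 2 : ℝ) - 350 * ε) * n ≤ (b : ℝ) ∧
          (n : ℝ) / 2 - K ≤ (b : ℝ)) →
      ∃ hne : M.Nonempty, M.min' hne ∈ A ∧
        Dom c n (M.min' hne) (Wf (M.min' hne)) (M.erase (M.min' hne)) := by
    intro M hmax hα hβ
    obtain ⟨a, haM, hamin, ha1, ha2, ha3⟩ := hα
    have hne : M.Nonempty := ⟨a, haM⟩
    have hmin : M.min' hne = a :=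
      le_antisymm (Finset.min'_le M a haM) (hamin _ (M.min'_mem hne))
    refine ⟨hne, ?_⟩
    rw [hmin]
    have haIcc : 1 ≤ a ∧ a ≤ n := by
      have := hmax.1 haM; rwa [Finset.mem_Icc] at this
    have hamemA : a ∈ A := by
      rw [hAdef, Finset.mem_filter, Finset.mem_Icc]
      exact ⟨haIcc, ha1, ha2, ha3⟩
    obtain ⟨ha0, hac, hrun⟩ := haA' a hamemA
    obtain ⟨_, ha5, ha7, _⟩ := haA a hamemA
    refine ⟨hamemA, ?_⟩
    -- rule out |M| = 1
    have hb : ∃ b ∈ M, a < b ∧ (∀ x ∈ M, x ≠ a → b ≤ x) ∧ (n:ℝ)/2 - K ≤ (b:ℝ) := by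
      rcases hβ with hcard | ⟨a₂, ha₂M, b, hbM, hab, hb2, _, hb4⟩
      · exfalso
        obtain ⟨x, hx⟩ := Finset.card_eq_one.mp hcard
        have hax : a = x := by
          have := haM; rw [hx, Finset.mem_singleton] at this; exact this
        subst hax
        have ha3' : 3 ≤ a := by
          have h400 : (400:ℕ) ≤ n := le_trans (Nat.mul_le_mul_left 200 (Nat.le_add_left 2 κ)) hn200
          have : (3:ℝ) < (a:ℝ) := by
            have : ((400:ℕ):ℝ) ≤ (n:ℝ) := Nat.cast_le.mpr h400
            push_cast at this; linarith
          exact_mod_cast le_of_lt this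
        have hsub : insert 1 {a} ⊆ Finset.Icc 1 n := by
          intro z hz
          rcases Finset.mem_insert.mp hz with rfl | hz
          · rw [Finset.mem_Icc]; omega
          · rw [Finset.mem_singleton] at hz; subst hz
            rw [Finset.mem_Icc]; omega
        have hsf : SumFree (insert 1 {a}) := by
          intro z hz w hw hzw
          simp only [Finset.mem_insert, Finset.mem_singleton] at hz hw hzw
          omega
        have heq := hmax.2.2 (insert 1 {a}) hsub hsf
          (by rw [hx]; exact Finset.subset_insert _ _)
        have h1M : (1:ℕ) ∈ M := by
          rw [heq]; exact Finset.mem_insert_self 1 {a}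
        rw [hx, Finset.mem_singleton] at h1M
        omega
      · have ha₂ : a₂ = a := by
          by_contra hne'
          have h1 : b ≤ a := hb2 a haM (fun he => hne' he.symm)
          have h2 : a ≤ a₂ := hamin a₂ ha₂M
          omega
        subst ha₂
        exact ⟨b, hbM, hab, hb2, hb4⟩
    obtain ⟨b, hbM, hab, hb2, hb4⟩ := hb
    have hcb : c ≤ b := by
      have : (c:ℝ) ≤ (b:ℝ) := by linarith
      exact_mod_cast this
    -- every element of M is a or lies in [c,n]
    have hMel : ∀ m ∈ M, m = a ∨ (c ≤ m ∧ m ≤ n) := by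
      intro m hm
      by_cases hma : m = a
      · exact Or.inl hma
      · right
        have h1 := hb2 m hm hma
        have h2 := hmax.1 hm; rw [Finset.mem_Icc] at h2
        omega
    have hBsub : M.erase a ⊆ Finset.Icc c n := by
      intro x hx
      obtain ⟨hxa, hxM⟩ := Finset.mem_erase.mp hx
      rcases hMel x hxM with h | h
      · exact absurd h hxa
      · rw [Finset.mem_Icc]; exact h
    refine ⟨hBsub, ?_, ?_⟩
    · intro x hx hx'
      obtain ⟨hxa, hxM⟩ := Finset.mem_erase.mp hx
      obtain ⟨_, hxaM⟩ := Finset.mem_erase.mp hx'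
      exact hmax.2.1 x hxM a haM hxaM
    · -- the domination property, from maximality
      intro t ht hWt htB
      rw [Finset.mem_Icc] at ht
      obtain ⟨htc, htn⟩ := ht
      have hta : a < t := lt_of_lt_of_le hac htc
      have htM : t ∉ M := by
        intro h
        exact htB (Finset.mem_erase.mpr ⟨by omega, h⟩)
      have hW1 : ∀ s : ℕ, c ≤ s → s ≤ n/2 + κ + 1 → s ∈ Wf a := by
        intro s h1 h2
        rw [hWfdef]
        exact Finset.mem_union_left _ (Finset.mem_union_left _
          (Finset.mem_Icc.mpr ⟨h1, h2⟩))
      have hW2 : ∀ s : ℕ, n - (2*κ+1) ≤ s → s ≤ n → s ∈ Wf a := by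
        intro s h1 h2
        rw [hWfdef]
        exact Finset.mem_union_left _ (Finset.mem_union_right _
          (Finset.mem_Icc.mpr ⟨h1, h2⟩))
      have hW3 : 2*a ∈ Wf a := by
        rw [hWfdef]
        exact Finset.mem_union_right _ (Finset.mem_singleton_self _)
      have hnsf : ¬ SumFree (insert t M) := by
        intro hsf
        have heq := hmax.2.2 (insert t M)
          (by
            intro z hz
            rcases Finset.mem_insert.mp hz with rfl | hz
            · rw [Finset.mem_Icc]; omega
            · exact hmax.1 hz)
          hsf (Finset.subset_insert t M)
        exact htM (heq ▸ Finset.mem_insert_self t M)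
      have hexists : ∃ x ∈ insert t M, ∃ y ∈ insert t M, x + y ∈ insert t M := by
        unfold SumFree at hnsf; push_neg at hnsf; exact hnsf
      obtain ⟨x, hx, y, hy, hxy⟩ := hexists
      have hmem : ∀ m ∈ M, 1 ≤ m ∧ m ≤ n := by
        intro m hm; have := hmax.1 hm; rwa [Finset.mem_Icc] at this
      have hBmem : ∀ m, m ∈ M → m ≠ a → m ∈ M.erase a := by
        intro m h1 h2; exact Finset.mem_erase.mpr ⟨h2, h1⟩
      rcases Finset.mem_insert.mp hx with hxt | hxM
      · -- x = t
        rw [hxt] at hxy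
        rcases Finset.mem_insert.mp hy with hyt | hyM
        · -- y = t : 2t ∈ insert t M
          rw [hyt] at hxy
          exfalso
          rcases Finset.mem_insert.mp hxy with h | h
          · omega
          · rcases hMel _ h with h' | h'
            · omega
            · exact hWt (hW1 t htc (by omega))
        · -- y ∈ M : t + y ∈ insert t M
          rcases Finset.mem_insert.mp hxy with h | h
          · exfalso; have := hmem y hyM; omega
          · rcases hMel y hyM with rfl | hy'
            · -- y = a : t + a ∈ M
              right
              refine hBmem _ h (by omega)
            · exfalso
              have h2 := hmem _ h
              exact hWt (hW1 t htc (by omega))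
      · rcases Finset.mem_insert.mp hy with hyt | hyM
        · -- x ∈ M, y = t
          rw [hyt] at hxy
          rcases Finset.mem_insert.mp hxy with h | h
          · exfalso; have := hmem x hxM; omega
          · rcases hMel x hxM with rfl | hx'
            · right
              have : x + t = t + x := by ring
              rw [this] at h
              refine hBmem _ h (by omega)
            · exfalso
              have h2 := hmem _ h
              exact hWt (hW1 t htc (by omega))
        · -- x, y ∈ M
          rcases Finset.mem_insert.mp hxy with h | h
          · -- x + y = t
            rcases hMel x hxM with hxa | hx' <;> rcases hMel y hyM with hya | hy'
            · exfalso; apply hWt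
              rw [show t = 2*a by omega]; exact hW3
            · left
              rw [show t - a = y by omega]
              exact hBmem y hyM (by omega)
            · left
              rw [show t - a = x by omega]
              exact hBmem x hxM (by omega)
            · exfalso
              exact hWt (hW2 t (by omega) htn)
          · exfalso
            exact hmax.2.1 x hxM y hyM h
  -- counting
  have hcount : (Set.ncard {M : Finset ℕ | MaxSF n M ∧
            (∃ a ∈ M, (∀ x ∈ M, a ≤ x) ∧
              ((1 / 4 : ℝ) - 175 * ε) * n ≤ (a : ℝ) ∧
              (a : ℝ) ≤ ((1 / 4 : ℝ) + 175 * ε) * n ∧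
              50 * K ≤ |(a : ℝ) - (n : ℝ) / 4|) ∧
            (M.card = 1 ∨
              ∃ a ∈ M, ∃ b ∈ M, a < b ∧ (∀ x ∈ M, x ≠ a → b ≤ x) ∧
                ((1 / 2 : ℝ) - 350 * ε) * n ≤ (b : ℝ) ∧
                (n : ℝ) / 2 - K ≤ (b : ℝ))}) ≤ T.card := by
    have hgen : ∀ F : Set (Finset ℕ),
        (∀ M ∈ F, ∃ hne : M.Nonempty, M.min' hne ∈ A ∧
          Dom c n (M.min' hne) (Wf (M.min' hne)) (M.erase (M.min' hne))) →
        F.ncard ≤ T.card := by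
      intro F hF
      have hinj : Set.InjOn Φ F := by
        intro M₁ h₁ M₂ h₂ heq
        obtain ⟨hne₁, hA₁, hd₁⟩ := hF M₁ h₁
        obtain ⟨hne₂, hA₂, hd₂⟩ := hF M₂ h₂
        rw [hΦdef] at heq
        simp only [dif_pos hne₁, dif_pos hne₂] at heq
        have heq1 : M₁.min' hne₁ = M₂.min' hne₂ := congrArg Prod.fst heq
        have heq2 : (M₁.erase (M₁.min' hne₁)) ∩ Sg (M₁.min' hne₁)
            = (M₂.erase (M₂.min' hne₂)) ∩ Sg (M₂.min' hne₂) := congrArg Prod.snd heq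
        obtain ⟨ha0, hac, hrun⟩ := haA' _ hA₁
        rw [← heq1] at hd₂ heq2
        have heq2' : (M₁.erase (M₁.min' hne₁)) ∩ Sig c n (M₁.min' hne₁) (Wf (M₁.min' hne₁))
            = (M₂.erase (M₁.min' hne₁)) ∩ Sig c n (M₁.min' hne₁) (Wf (M₁.min' hne₁)) := by
          simpa only [hSgdef] using heq2
        have hBeq := reconstruct ha0 hac hrun hd₁ hd₂ heq2'
        have hmem₁ : M₁.min' hne₁ ∈ M₁ := M₁.min'_mem hne₁
        have hmem₂ : M₁.min' hne₁ ∈ M₂ := by rw [heq1]; exact M₂.min'_mem hne₂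
        calc M₁ = insert (M₁.min' hne₁) (M₁.erase (M₁.min' hne₁)) :=
              (Finset.insert_erase hmem₁).symm
          _ = insert (M₁.min' hne₁) (M₂.erase (M₁.min' hne₁)) := by rw [hBeq]
          _ = M₂ := Finset.insert_erase hmem₂
      have himg : ∀ M ∈ F, Φ M ∈ (T : Set (ℕ × Finset ℕ)) := by
        intro M hM
        obtain ⟨hne, hA₁, hd⟩ := hF M hM
        rw [hΦdef]
        simp only [dif_pos hne]
        rw [Finset.mem_coe, hTdef]
        refine Finset.mem_biUnion.mpr ⟨M.min' hne, hA₁, ?_⟩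
        exact Finset.mem_image.mpr
          ⟨_, Finset.mem_powerset.mpr Finset.inter_subset_right, rfl⟩
      calc F.ncard = (Φ '' F).ncard := (Set.ncard_image_of_injOn hinj).symm
        _ ≤ (↑T : Set (ℕ × Finset ℕ)).ncard :=
            Set.ncard_le_ncard (by rintro _ ⟨M, hM, rfl⟩; exact himg M hM) T.finite_toSet
        _ = T.card := Set.ncard_coe_finset T
    exact hgen _ (fun M hM => key M hM.1 hM.2.1 hM.2.2)
  have hTsum : (T.card : ℝ) ≤ ∑ a ∈ A, C * (2:ℝ) ^ ((mins a).card) := by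
    have h1 : T.card ≤ ∑ a ∈ A, (2:ℕ) ^ ((Sg a).card) := by
      rw [hTdef]
      refine le_trans (Finset.card_biUnion_le) (Finset.sum_le_sum ?_)
      intro a _
      calc ((Sg a).powerset.image fun s => (a, s)).card
          ≤ (Sg a).powerset.card := Finset.card_image_le
        _ = 2 ^ (Sg a).card := Finset.card_powerset _
    have h2 : (T.card : ℝ) ≤ ∑ a ∈ A, (2:ℝ) ^ ((Sg a).card) := by
      calc (T.card : ℝ) ≤ ((∑ a ∈ A, (2:ℕ) ^ ((Sg a).card) : ℕ) : ℝ) :=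
            Nat.cast_le.mpr h1
        _ = ∑ a ∈ A, (2:ℝ) ^ ((Sg a).card) := by push_cast; rfl
    refine le_trans h2 (Finset.sum_le_sum ?_)
    intro a ha
    obtain ⟨ha0, hac, hrun⟩ := haA' a ha
    have hWcard : (Wf a).card ≤ 4*κ+5 := by
      rw [hWfdef]
      refine le_trans (Finset.card_union_le _ _) ?_
      have h3 : (Finset.Icc c (n/2 + κ + 1) ∪ Finset.Icc (n - (2*κ+1)) n).card ≤ 4*κ+4 := by
        refine le_trans (Finset.card_union_le _ _) ?_
        rw [Nat.card_Icc, Nat.card_Icc]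
        omega
      simp only [Finset.card_singleton]
      omega
    have hsig : (Sg a).card ≤ (8*κ+10) + (mins a).card := by
      have h4 := sig_card (c := c) (n := n) (a := a) hac (Wf a)
      have h5 : ((Finset.Icc c n).filter fun x => x < c + a ∧ x + a ≤ n) = mins a := by
        rw [hminsdef]
      rw [h5] at h4
      simp only [hSgdef]
      omega
    calc (2:ℝ) ^ ((Sg a).card) ≤ (2:ℝ) ^ ((8*κ+10) + (mins a).card) :=
          pow_le_pow_right₀ (by norm_num) hsig
      _ = C * (2:ℝ) ^ ((mins a).card) := by rw [hCdef, pow_add]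
  have hsum : ∑ a ∈ A, C * (2:ℝ) ^ ((mins a).card) ≤ ε * (2:ℝ) ^ ((n:ℝ)/4) := by
    have hK0 : (0:ℝ) < K := by linarith
    have hC0 : (0:ℝ) ≤ C := by positivity
    have hnKR : 200 * K ≤ (n:ℝ) := by
      have h1 : ((200 * (κ+2) : ℕ):ℝ) ≤ (n:ℝ) := Nat.cast_le.mpr hn200
      push_cast at h1
      linarith
    have hmle : ∀ a : ℕ, (mins a).card ≤ a := by
      intro a
      have hsub : mins a ⊆ Finset.Ico c (c+a) := by
        rw [hminsdef]
        intro x hx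
        rw [Finset.mem_filter, Finset.mem_Icc] at hx
        rw [Finset.mem_Ico]
        omega
      have h1 := Finset.card_le_card hsub
      rw [Nat.card_Ico] at h1
      omega
    have hm2 : ∀ a : ℕ, c + a ≤ n → (mins a).card + c + a ≤ n + 1 := by
      intro a hca
      have hsub : mins a ⊆ Finset.Icc c (n - a) := by
        rw [hminsdef]
        intro x hx
        rw [Finset.mem_filter, Finset.mem_Icc] at hx
        rw [Finset.mem_Icc]
        omega
      have h1 := Finset.card_le_card hsub
      rw [Nat.card_Icc] at h1
      omega
    have hm0 : ∀ a : ℕ, ¬ (c + a ≤ n) → (mins a).card = 0 := by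
      intro a hca
      rw [hminsdef, Finset.card_eq_zero, Finset.filter_eq_empty_iff]
      intro x hx
      rw [Finset.mem_Icc] at hx
      omega
    set p : ℕ → Prop := fun a => (a:ℝ) ≤ (n:ℝ)/4 with hpdef
    set M₁ : ℕ := ⌊(n:ℝ)/4 - 50*K⌋₊ with hM₁def
    set L : ℕ := ⌈(n:ℝ)/4 + 50*K⌉₊ with hLdef
    -- first part
    have hS1 : ∑ a ∈ A.filter p, C * (2:ℝ)^((mins a).card)
        ≤ C * (2:ℝ) ^ ((n:ℝ)/4 - 50*K + 1) := by
      have hsub : A.filter p ⊆ Finset.range (M₁+1) := by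
        intro a ha
        rw [Finset.mem_filter] at ha
        obtain ⟨haA2, hle⟩ := ha
        obtain ⟨_, _, _, habs⟩ := haA a haA2
        rw [hpdef] at hle
        have h6 : |(a:ℝ) - (n:ℝ)/4| = (n:ℝ)/4 - a := by
          rw [abs_of_nonpos (by linarith)]; ring
        rw [h6] at habs
        have h7 : (a:ℝ) ≤ (n:ℝ)/4 - 50*K := by linarith
        rw [Finset.mem_range]
        have h8 := Nat.le_floor h7
        omega
      calc ∑ a ∈ A.filter p, C * (2:ℝ)^((mins a).card)
          ≤ ∑ a ∈ A.filter p, C * (2:ℝ)^(a:ℕ) := by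
            refine Finset.sum_le_sum (fun a _ => ?_)
            exact mul_le_mul_of_nonneg_left
              (pow_le_pow_right₀ (by norm_num) (hmle a)) hC0
        _ ≤ ∑ a ∈ Finset.range (M₁+1), C * (2:ℝ)^(a:ℕ) :=
            Finset.sum_le_sum_of_subset_of_nonneg hsub (by intros; positivity)
        _ = C * ∑ a ∈ Finset.range (M₁+1), (2:ℝ)^a := by rw [Finset.mul_sum]
        _ ≤ C * (2:ℝ)^(M₁+1 : ℕ) := by
            refine mul_le_mul_of_nonneg_left ?_ hC0
            rw [geom_sum_eq (by norm_num : (2:ℝ) ≠ 1)]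
            have h9 : (0:ℝ) ≤ (2:ℝ)^(M₁+1) := by positivity
            norm_num
        _ ≤ C * (2:ℝ)^((n:ℝ)/4 - 50*K + 1) := by
            refine mul_le_mul_of_nonneg_left ?_ hC0
            rw [← Real.rpow_natCast 2 (M₁+1)]
            refine Real.rpow_le_rpow_of_exponent_le (by norm_num) ?_
            push_cast
            have hfl : (M₁:ℝ) ≤ (n:ℝ)/4 - 50*K := Nat.floor_le (by linarith)
            linarith
    -- second part
    have hA2sub : A.filter (fun a => ¬ p a) ⊆ Finset.Icc L n := by
      intro a ha
      rw [Finset.mem_filter] at ha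
      obtain ⟨haA2, hgt⟩ := ha
      obtain ⟨⟨_, han⟩, _, _, habs⟩ := haA a haA2
      rw [hpdef] at hgt
      push_neg at hgt
      have h6 : |(a:ℝ) - (n:ℝ)/4| = (a:ℝ) - (n:ℝ)/4 := abs_of_nonneg (by linarith)
      rw [h6] at habs
      rw [Finset.mem_Icc]
      exact ⟨Nat.ceil_le.mpr (by linarith), han⟩
    have hterm' : ∀ a ∈ A.filter (fun a => ¬ p a),
        (2:ℝ)^((mins a).card) ≤ 1 + (2:ℝ)^((n:ℝ)/2 + (κ:ℝ) + 2) * ((2:ℝ)⁻¹)^(a:ℕ) := by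
      intro a _
      by_cases hca : c + a ≤ n
      · have h7 := hm2 a hca
        have h8 : ((mins a).card : ℝ) ≤ (n:ℝ)/2 + (κ:ℝ) + 2 - a := by
          have h9 : (((mins a).card + c + a : ℕ) : ℝ) ≤ (n:ℝ) + 1 := by exact_mod_cast h7
          push_cast at h9
          linarith
        have h10 : (2:ℝ)^((mins a).card) ≤ (2:ℝ)^((n:ℝ)/2 + (κ:ℝ) + 2 - a) := by
          rw [← Real.rpow_natCast 2 ((mins a).card)]
          exact Real.rpow_le_rpow_of_exponent_le (by norm_num) h8
        have h11 : (2:ℝ)^((n:ℝ)/2 + (κ:ℝ) + 2 - a)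
            = (2:ℝ)^((n:ℝ)/2 + (κ:ℝ) + 2) * ((2:ℝ)⁻¹)^(a:ℕ) := by
          rw [Real.rpow_sub (by norm_num), Real.rpow_natCast, div_eq_mul_inv, ← inv_pow]
        rw [h11] at h10
        have h12 : (0:ℝ) ≤ (2:ℝ)^((n:ℝ)/2 + (κ:ℝ) + 2) * ((2:ℝ)⁻¹)^(a:ℕ) := by positivity
        linarith
      · rw [hm0 a hca]
        have h12 : (0:ℝ) ≤ (2:ℝ)^((n:ℝ)/2 + (κ:ℝ) + 2) * ((2:ℝ)⁻¹)^(a:ℕ) := by positivity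
        simp only [pow_zero]
        linarith
    have hcard2 : ((A.filter (fun a => ¬ p a)).card : ℝ) ≤ (n:ℝ) := by
      have h1 : (A.filter (fun a => ¬ p a)).card ≤ (Finset.Icc 1 n).card := by
        refine Finset.card_le_card (fun a ha => ?_)
        have h2 := (Finset.mem_filter.mp ha).1
        rw [hAdef] at h2
        exact (Finset.mem_filter.mp h2).1
      rw [Nat.card_Icc] at h1
      exact_mod_cast le_trans h1 (by omega)
    have hgeo : ∑ a ∈ A.filter (fun a => ¬ p a), ((2:ℝ)⁻¹)^a
        ≤ 2 * (2:ℝ)^(-((n:ℝ)/4 + 50*K)) := by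
      have h1 : ∑ a ∈ A.filter (fun a => ¬ p a), ((2:ℝ)⁻¹)^a
          ≤ 2 * ((2:ℝ)⁻¹)^L :=
        le_trans (Finset.sum_le_sum_of_subset_of_nonneg hA2sub (by intros; positivity))
          (sum_inv_pow_Icc L n)
      have h2 : ((2:ℝ)⁻¹)^L = (2:ℝ)^(-(L:ℝ)) := by
        rw [inv_pow, ← Real.rpow_natCast 2 L, ← Real.rpow_neg (by norm_num : (0:ℝ) ≤ 2)]
      have h3 : (2:ℝ)^(-(L:ℝ)) ≤ (2:ℝ)^(-((n:ℝ)/4 + 50*K)) := by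
        refine Real.rpow_le_rpow_of_exponent_le (by norm_num) ?_
        have := Nat.le_ceil ((n:ℝ)/4 + 50*K)
        rw [← hLdef] at this
        linarith
      rw [h2] at h1
      linarith
    have hS2 : ∑ a ∈ A.filter (fun a => ¬ p a), C * (2:ℝ)^((mins a).card)
        ≤ C * (n:ℝ) + C * (2:ℝ)^((n:ℝ)/4 + (κ:ℝ) + 3 - 50*K) := by
      rw [← Finset.mul_sum]
      have hsum2 : ∑ a ∈ A.filter (fun a => ¬ p a), (2:ℝ)^((mins a).card)
          ≤ (n:ℝ) + (2:ℝ)^((n:ℝ)/4 + (κ:ℝ) + 3 - 50*K) := by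
        calc ∑ a ∈ A.filter (fun a => ¬ p a), (2:ℝ)^((mins a).card)
            ≤ ∑ a ∈ A.filter (fun a => ¬ p a),
                (1 + (2:ℝ)^((n:ℝ)/2 + (κ:ℝ) + 2) * ((2:ℝ)⁻¹)^(a:ℕ)) :=
              Finset.sum_le_sum hterm'
          _ = ((A.filter (fun a => ¬ p a)).card : ℝ)
                + (2:ℝ)^((n:ℝ)/2 + (κ:ℝ) + 2)
                  * ∑ a ∈ A.filter (fun a => ¬ p a), ((2:ℝ)⁻¹)^a := by
              rw [Finset.sum_add_distrib, Finset.sum_const, nsmul_eq_mul, mul_one,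
                ← Finset.mul_sum]
          _ ≤ (n:ℝ) + (2:ℝ)^((n:ℝ)/2 + (κ:ℝ) + 2)
                * (2 * (2:ℝ)^(-((n:ℝ)/4 + 50*K))) := by
              refine add_le_add hcard2 (mul_le_mul_of_nonneg_left hgeo (by positivity))
          _ = (n:ℝ) + (2:ℝ)^((n:ℝ)/4 + (κ:ℝ) + 3 - 50*K) := by
              congr 1
              rw [show (2:ℝ) * (2:ℝ)^(-((n:ℝ)/4 + 50*K))
                  = (2:ℝ)^(1:ℝ) * (2:ℝ)^(-((n:ℝ)/4 + 50*K)) from by rw [Real.rpow_one],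
                ← Real.rpow_add (by norm_num), ← Real.rpow_add (by norm_num)]
              congr 1
              ring
      calc C * ∑ a ∈ A.filter (fun a => ¬ p a), (2:ℝ)^((mins a).card)
          ≤ C * ((n:ℝ) + (2:ℝ)^((n:ℝ)/4 + (κ:ℝ) + 3 - 50*K)) :=
            mul_le_mul_of_nonneg_left hsum2 hC0
        _ = C * (n:ℝ) + C * (2:ℝ)^((n:ℝ)/4 + (κ:ℝ) + 3 - 50*K) := by ring
    -- combining
    have hCr : C = (2:ℝ)^(((8*κ+10 : ℕ)):ℝ) := by rw [hCdef, Real.rpow_natCast]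
    have hbound : ∀ E : ℝ, E ≤ 22 - 41*K →
        (2:ℝ)^((n:ℝ)/4 + E) ≤ (ε/4) * (2:ℝ)^((n:ℝ)/4) := by
      intro E hE
      have hεlog : (2:ℝ)^(Real.logb 2 ε) = ε :=
        Real.rpow_logb (by norm_num) (by norm_num) hε
      have hlinv : Real.logb 2 (1/ε) = - Real.logb 2 ε := by
        rw [one_div, Real.logb_inv]
      have hKE : E ≤ Real.logb 2 ε - 2 := by
        rw [hlinv] at hK hlogb
        linarith
      have h4 : (2:ℝ)^((2:ℝ)) = 4 := by
        rw [show ((2:ℝ):ℝ) = ((2:ℕ):ℝ) from by norm_num, Real.rpow_natCast]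
        norm_num
      calc (2:ℝ)^((n:ℝ)/4 + E) ≤ (2:ℝ)^((n:ℝ)/4 + (Real.logb 2 ε - 2)) :=
            Real.rpow_le_rpow_of_exponent_le (by norm_num) (by linarith)
        _ = (ε/4) * (2:ℝ)^((n:ℝ)/4) := by
            rw [show (n:ℝ)/4 + (Real.logb 2 ε - 2) = Real.logb 2 ε + (-(2:ℝ)) + (n:ℝ)/4
              from by ring, Real.rpow_add (by norm_num), Real.rpow_add (by norm_num),
              hεlog, Real.rpow_neg (by norm_num : (0:ℝ) ≤ 2), h4]
            ring
    have hfinal1 : C * (2:ℝ)^((n:ℝ)/4 - 50*K + 1) + C * (2:ℝ)^((n:ℝ)/4 + (κ:ℝ) + 3 - 50*K)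
        ≤ (ε/2) * (2:ℝ)^((n:ℝ)/4) := by
      have e1 : C * (2:ℝ)^((n:ℝ)/4 - 50*K + 1)
          = (2:ℝ)^((n:ℝ)/4 + ((8*(κ:ℝ)+11) - 50*K)) := by
        rw [hCr, ← Real.rpow_add (by norm_num)]
        congr 1
        push_cast
        ring
      have e2 : C * (2:ℝ)^((n:ℝ)/4 + (κ:ℝ) + 3 - 50*K)
          = (2:ℝ)^((n:ℝ)/4 + ((9*(κ:ℝ)+13) - 50*K)) := by
        rw [hCr, ← Real.rpow_add (by norm_num)]
        congr 1
        push_cast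
        ring
      rw [e1, e2]
      have hb1 := hbound ((8*(κ:ℝ)+11) - 50*K) (by linarith)
      have hb2 := hbound ((9*(κ:ℝ)+13) - 50*K) (by linarith)
      linarith
    have hfinal2 : C * (n:ℝ) ≤ (ε/2) * (2:ℝ)^((n:ℝ)/4) := by
      have hq := quad_le_rpow ((n:ℝ)/4) (by positivity)
      have h3 : (n:ℝ)*(n:ℝ)/144 ≤ (2:ℝ)^((n:ℝ)/4) := by
        have heq : ((n:ℝ)/4)^2/9 = (n:ℝ)*(n:ℝ)/144 := by ring
        linarith [hq, heq ▸ hq]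
      have h1 : 1024 * (C * (1/ε)) * (n:ℝ) ≤ (n:ℝ) * n :=
        mul_le_mul_of_nonneg_right hnC hεn
      have h2 : 1024 * C * (n:ℝ) ≤ ε * ((n:ℝ) * n) := by
        calc 1024 * C * (n:ℝ) = ε * (1024 * (C * (1/ε)) * n) := by
              field_simp
          _ ≤ ε * ((n:ℝ)*n) := mul_le_mul_of_nonneg_left h1 hε.le
      have h4 : C * (n:ℝ) ≤ (ε/2) * ((n:ℝ)*(n:ℝ)/144) := by
        have h5 : (0:ℝ) ≤ ε * ((n:ℝ)*n) := by positivity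
        linarith
      have h6 : (ε/2) * ((n:ℝ)*(n:ℝ)/144) ≤ (ε/2) * (2:ℝ)^((n:ℝ)/4) :=
        mul_le_mul_of_nonneg_left h3 (by linarith)
      linarith
    calc ∑ a ∈ A, C * (2:ℝ) ^ ((mins a).card)
        = ∑ a ∈ A.filter p, C * (2:ℝ)^((mins a).card)
          + ∑ a ∈ A.filter (fun a => ¬ p a), C * (2:ℝ)^((mins a).card) :=
          (Finset.sum_filter_add_sum_filter_not A p _).symm
      _ ≤ C * (2:ℝ) ^ ((n:ℝ)/4 - 50*K + 1)
          + (C * (n:ℝ) + C * (2:ℝ)^((n:ℝ)/4 + (κ:ℝ) + 3 - 50*K)) := add_le_add hS1 hS2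
      _ = C * (n:ℝ) + (C * (2:ℝ)^((n:ℝ)/4 - 50*K + 1)
          + C * (2:ℝ)^((n:ℝ)/4 + (κ:ℝ) + 3 - 50*K)) := by ring
      _ ≤ (ε/2) * (2:ℝ)^((n:ℝ)/4) + (ε/2) * (2:ℝ)^((n:ℝ)/4) := add_le_add hfinal2 hfinal1
      _ = ε * (2:ℝ)^((n:ℝ)/4) := by ring
  calc (Set.ncard _ : ℝ) ≤ (T.card : ℝ) := Nat.cast_le.mpr hcount
  _ ≤ ∑ a ∈ A, C * (2:ℝ) ^ ((mins a).card) := hTsum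
  _ ≤ ε * (2:ℝ) ^ ((n:ℝ)/4) := hsum
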